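/- Let ϑ⋆ ∈ ℝ ∖ {0}, ν⋆ ∈ ℂ ∖ {0}, μ ∈ ℝ, and let k', ℓ ∈ ℂ with k' ≠ 0 and Re(k'·conj(ℓ)) = 0; set ϑ_F = |ϑ⋆|, ν_F = |ν⋆|, and fix ϑ♯ ∈ (0, ϑ_F). Then there exists C > 0 such that for every z ∈ ℂ with |z| ≤ ϑ♯ and every τ ∈ ℝ, the 2×2 matrix A(τ,z) with rows (ϑ⋆ − z, ν⋆(τk' + μℓ)) and (conj(ν⋆(τk' + μℓ)), −ϑ⋆ − z) is invertible and ‖A(τ,z)⁻¹‖ ≤ C/(1 + |τ|). In particular, for every a > 0 one has ‖A(τ,z)⁻¹‖ ≤ C/a whenever |τ| ≥ a, and |τ|·‖A(τ,z)⁻¹‖ ≤ C for all τ ∈ ℝ. -/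

import Mathlib

open Matrix

set_option maxHeartbeats 1000000
set_option synthInstance.maxHeartbeats 400000

lemma coord2 (x : EuclideanSpace ℂ (Fin 2)) (i : Fin 2) : ‖x i‖ ≤ ‖x‖ := by
  have h : ‖x i‖ ^ 2 ≤ ‖x 0‖ ^ 2 + ‖x 1‖ ^ 2 := by
    fin_cases i <;> simp <;> positivity
  calc ‖x i‖ = Real.sqrt (‖x i‖ ^ 2) := (Real.sqrt_sq (norm_nonneg _)).symm
    _ ≤ Real.sqrt (‖x 0‖ ^ 2 + ‖x 1‖ ^ 2) := Real.sqrt_le_sqrt h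
    _ = ‖x‖ := by rw [EuclideanSpace.norm_eq, Fin.sum_univ_two]

lemma mv2 (M : Matrix (Fin 2) (Fin 2) ℂ) (x : EuclideanSpace ℂ (Fin 2)) (i : Fin 2) :
    Matrix.toEuclideanCLM (𝕜 := ℂ) M x i = M i 0 * x 0 + M i 1 * x 1 := by
  have : Matrix.toEuclideanCLM (𝕜 := ℂ) M x = Matrix.toEuclideanLin M x := rfl
  rw [this, Matrix.toEuclideanLin_apply]
  simp [Matrix.mulVec, dotProduct, Fin.sum_univ_two]

lemma opnorm2 (a b c d : ℂ) :
    ‖Matrix.toEuclideanCLM (𝕜 := ℂ) !![a, b; c, d]‖ ≤ ‖a‖ + ‖b‖ + ‖c‖ + ‖d‖ := by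
  apply ContinuousLinearMap.opNorm_le_bound _ (by positivity)
  intro x
  set y := Matrix.toEuclideanCLM (𝕜 := ℂ) !![a, b; c, d] x with hy
  have e0 : y 0 = a * x 0 + b * x 1 := by rw [hy, mv2]; norm_num
  have e1 : y 1 = c * x 0 + d * x 1 := by rw [hy, mv2]; norm_num
  have h0 : ‖y 0‖ ≤ (‖a‖ + ‖b‖) * ‖x‖ := by
    rw [e0]
    calc ‖a * x 0 + b * x 1‖ ≤ ‖a‖ * ‖x 0‖ + ‖b‖ * ‖x 1‖ := by
          refine le_trans (norm_add_le _ _) ?_; simp [norm_mul]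
      _ ≤ ‖a‖ * ‖x‖ + ‖b‖ * ‖x‖ := by
          gcongr <;> [exact coord2 x 0; exact coord2 x 1]
      _ = (‖a‖ + ‖b‖) * ‖x‖ := by ring
  have h1 : ‖y 1‖ ≤ (‖c‖ + ‖d‖) * ‖x‖ := by
    rw [e1]
    calc ‖c * x 0 + d * x 1‖ ≤ ‖c‖ * ‖x 0‖ + ‖d‖ * ‖x 1‖ := by
          refine le_trans (norm_add_le _ _) ?_; simp [norm_mul]
      _ ≤ ‖c‖ * ‖x‖ + ‖d‖ * ‖x‖ := by
          gcongr <;> [exact coord2 x 0; exact coord2 x 1]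
      _ = (‖c‖ + ‖d‖) * ‖x‖ := by ring
  have hny : ‖y‖ ≤ ‖y 0‖ + ‖y 1‖ := by
    calc ‖y‖ = Real.sqrt (‖y 0‖ ^ 2 + ‖y 1‖ ^ 2) := by
          rw [EuclideanSpace.norm_eq, Fin.sum_univ_two]
      _ ≤ Real.sqrt ((‖y 0‖ + ‖y 1‖) ^ 2) := by
          apply Real.sqrt_le_sqrt; nlinarith [norm_nonneg (y 0), norm_nonneg (y 1)]
      _ = ‖y 0‖ + ‖y 1‖ := Real.sqrt_sq (by positivity)
  calc ‖y‖ ≤ ‖y 0‖ + ‖y 1‖ := hny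
    _ ≤ (‖a‖ + ‖b‖) * ‖x‖ + (‖c‖ + ‖d‖) * ‖x‖ := add_le_add h0 h1
    _ = (‖a‖ + ‖b‖ + ‖c‖ + ‖d‖) * ‖x‖ := by ring


/-- The 2×2 symbol `A(τ,z)` appearing in Lemma 1k of the paper. -/
noncomputable def Amat (ϑstar : ℝ) (νstar k' ℓ : ℂ) (μ : ℝ) (τ : ℝ) (z : ℂ) :
    Matrix (Fin 2) (Fin 2) ℂ :=
  !![(ϑstar : ℂ) - z, νstar * ((τ : ℂ) * k' + (μ : ℂ) * ℓ);
     (starRingEnd ℂ) (νstar * ((τ : ℂ) * k' + (μ : ℂ) * ℓ)), -(ϑstar : ℂ) - z]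

/-- Lemma 1k of the paper: the inverse symbol `A(τ,z)⁻¹` is an order `-1` symbol,
uniformly for `|z| ≤ ϑ♯ < ϑ_F`. -/
theorem stmt2 (ϑstar : ℝ) (hϑ : ϑstar ≠ 0) (νstar : ℂ) (hν : νstar ≠ 0) (μ : ℝ)
    (k' ℓ : ℂ) (hk : k' ≠ 0) (horth : (k' * (starRingEnd ℂ) ℓ).re = 0)
    (ϑsharp : ℝ) (hϑs : ϑsharp ∈ Set.Ioo (0 : ℝ) |ϑstar|) :
    ∃ C > 0, ∀ z : ℂ, ‖z‖ ≤ ϑsharp → ∀ τ : ℝ,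
      IsUnit (Amat ϑstar νstar k' ℓ μ τ z) ∧
      ‖Matrix.toEuclideanCLM (𝕜 := ℂ) ((Amat ϑstar νstar k' ℓ μ τ z)⁻¹)‖ ≤ C / (1 + |τ|) ∧
      (∀ a : ℝ, 0 < a → a ≤ |τ| →
        ‖Matrix.toEuclideanCLM (𝕜 := ℂ) ((Amat ϑstar νstar k' ℓ μ τ z)⁻¹)‖ ≤ C / a) ∧
      |τ| * ‖Matrix.toEuclideanCLM (𝕜 := ℂ) ((Amat ϑstar νstar k' ℓ μ τ z)⁻¹)‖ ≤ C := by
  obtain ⟨hs0, hsθ⟩ := hϑs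
  set c1 : ℝ := min (ϑstar ^ 2 - ϑsharp ^ 2) (‖νstar‖ ^ 2 * ‖k'‖ ^ 2) with hc1
  have hϑ2 : ϑsharp ^ 2 < ϑstar ^ 2 := by
    have := sq_abs ϑstar
    nlinarith [abs_nonneg ϑstar]
  have hc1pos : 0 < c1 := by
    apply lt_min (by nlinarith)
    have h1 : 0 < ‖νstar‖ := norm_pos_iff.mpr hν
    have h2 : 0 < ‖k'‖ := norm_pos_iff.mpr hk
    positivity
  set c2 : ℝ := ‖νstar‖ * (‖k'‖ + |μ| * ‖ℓ‖) with hc2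
  have hc2nn : 0 ≤ c2 := by positivity
  set K : ℝ := 2 * (|ϑstar| + ϑsharp + c2) with hK
  have hKpos : 0 < K := by
    have : 0 < |ϑstar| := abs_pos.mpr hϑ
    positivity
  refine ⟨2 * K / c1, by positivity, ?_⟩
  intro z hz τ
  set w : ℂ := νstar * ((τ : ℂ) * k' + (μ : ℂ) * ℓ) with hw
  -- orthogonality
  have horth' : k'.re * ℓ.re + k'.im * ℓ.im = 0 := by
    simp only [Complex.mul_re, Complex.conj_re, Complex.conj_im] at horth
    linarith
  -- norm of τ k' + μ ℓ
  have hsum : ‖(τ : ℂ) * k' + (μ : ℂ) * ℓ‖ ^ 2 = τ ^ 2 * ‖k'‖ ^ 2 + μ ^ 2 * ‖ℓ‖ ^ 2 := by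
    simp only [Complex.sq_norm, Complex.normSq_apply, Complex.add_re,
      Complex.add_im, Complex.mul_re, Complex.mul_im, Complex.ofReal_re, Complex.ofReal_im]
    linear_combination (2 * τ * μ) * horth'
  have hw2 : ‖νstar‖ ^ 2 * ‖k'‖ ^ 2 * τ ^ 2 ≤ ‖w‖ ^ 2 := by
    rw [hw, norm_mul, mul_pow, hsum]
    nlinarith [norm_nonneg νstar, sq_nonneg μ, norm_nonneg ℓ, sq_nonneg (‖νstar‖ * ‖ℓ‖ * μ)]
  have hwub : ‖w‖ ≤ c2 * (1 + |τ|) := by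
    rw [hw, norm_mul]
    have : ‖(τ : ℂ) * k' + (μ : ℂ) * ℓ‖ ≤ |τ| * ‖k'‖ + |μ| * ‖ℓ‖ := by
      refine le_trans (norm_add_le _ _) ?_
      simp [norm_mul, Complex.norm_real]
    calc ‖νstar‖ * ‖(τ : ℂ) * k' + (μ : ℂ) * ℓ‖ ≤ ‖νstar‖ * (|τ| * ‖k'‖ + |μ| * ‖ℓ‖) := by
          gcongr
      _ ≤ c2 * (1 + |τ|) := by
          rw [hc2]
          nlinarith [mul_nonneg (norm_nonneg νstar) (norm_nonneg k'),
            mul_nonneg (mul_nonneg (mul_nonneg (norm_nonneg νstar) (abs_nonneg τ)) (abs_nonneg μ)) (norm_nonneg ℓ)]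
  -- determinant
  have hdet : (Amat ϑstar νstar k' ℓ μ τ z).det
      = z ^ 2 - ((ϑstar ^ 2 + ‖w‖ ^ 2 : ℝ) : ℂ) := by
    have hconj : w * (starRingEnd ℂ) w = ((‖w‖ ^ 2 : ℝ) : ℂ) := by
      rw [Complex.mul_conj]
      norm_cast
      rw [Complex.normSq_eq_norm_sq]
    simp only [Amat, Matrix.det_fin_two_of, ← hw]
    rw [show ((ϑstar : ℂ) - z) * (-(ϑstar : ℂ) - z) = z ^ 2 - ((ϑstar : ℂ)) ^ 2 by ring]
    rw [mul_comm w ((starRingEnd ℂ) w)] at hconj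
    rw [mul_comm ((starRingEnd ℂ) w) w] at hconj
    rw [hconj]
    push_cast
    ring
  have hdlow : c1 * (1 + τ ^ 2) ≤ ‖(Amat ϑstar νstar k' ℓ μ τ z).det‖ := by
    rw [hdet]
    have h1 : ‖((ϑstar ^ 2 + ‖w‖ ^ 2 : ℝ) : ℂ)‖ = ϑstar ^ 2 + ‖w‖ ^ 2 := by
      rw [Complex.norm_real, Real.norm_of_nonneg (by positivity)]
    have h2 : ‖z ^ 2‖ ≤ ϑsharp ^ 2 := by
      rw [norm_pow]
      nlinarith [norm_nonneg z]
    have h3 : ‖((ϑstar ^ 2 + ‖w‖ ^ 2 : ℝ) : ℂ)‖ - ‖z ^ 2‖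
        ≤ ‖z ^ 2 - ((ϑstar ^ 2 + ‖w‖ ^ 2 : ℝ) : ℂ)‖ := by
      rw [norm_sub_rev]
      exact norm_sub_norm_le _ _
    have hc1a : c1 ≤ ϑstar ^ 2 - ϑsharp ^ 2 := min_le_left _ _
    have hc1b : c1 ≤ ‖νstar‖ ^ 2 * ‖k'‖ ^ 2 := min_le_right _ _
    have hq : c1 * τ ^ 2 ≤ ‖νstar‖ ^ 2 * ‖k'‖ ^ 2 * τ ^ 2 :=
      mul_le_mul_of_nonneg_right hc1b (sq_nonneg τ)
    rw [h1] at h3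
    linarith [hw2]
  have hdpos : 0 < ‖(Amat ϑstar νstar k' ℓ μ τ z).det‖ := by
    refine lt_of_lt_of_le ?_ hdlow
    nlinarith [sq_nonneg τ]
  have hdet0 : (Amat ϑstar νstar k' ℓ μ τ z).det ≠ 0 := by
    intro h; rw [h] at hdpos; simp at hdpos
  have hUnit : IsUnit (Amat ϑstar νstar k' ℓ μ τ z) :=
    (Matrix.isUnit_iff_isUnit_det _).mpr (isUnit_iff_ne_zero.mpr hdet0)
  -- inverse formula
  set d : ℂ := (Amat ϑstar νstar k' ℓ μ τ z).det with hd
  have hinv : (Amat ϑstar νstar k' ℓ μ τ z)⁻¹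
      = d⁻¹ • !![-(ϑstar : ℂ) - z, -w; -((starRingEnd ℂ) w), (ϑstar : ℂ) - z] := by
    rw [Matrix.inv_def, Ring.inverse_eq_inv, ← hd]
    congr 1
    show Matrix.adjugate !![(ϑstar : ℂ) - z, w; (starRingEnd ℂ) w, -(ϑstar : ℂ) - z] = _
    rw [Matrix.adjugate_fin_two_of]
  -- operator norm bound
  have hsmul : Matrix.toEuclideanCLM (𝕜 := ℂ) ((Amat ϑstar νstar k' ℓ μ τ z)⁻¹)
      = d⁻¹ • Matrix.toEuclideanCLM (𝕜 := ℂ)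
          !![-(ϑstar : ℂ) - z, -w; -((starRingEnd ℂ) w), (ϑstar : ℂ) - z] := by
    rw [hinv, _root_.map_smul]
  set N : ℝ := ‖Matrix.toEuclideanCLM (𝕜 := ℂ) ((Amat ϑstar νstar k' ℓ μ τ z)⁻¹)‖ with hN
  have hNb : N ≤ K * (1 + |τ|) / ‖d‖ := by
    rw [hN, hsmul]
    rw [norm_smul d⁻¹ (Matrix.toEuclideanCLM (𝕜 := ℂ)
          !![-(ϑstar : ℂ) - z, -w; -((starRingEnd ℂ) w), (ϑstar : ℂ) - z]), norm_inv]
    rw [div_eq_inv_mul]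
    refine mul_le_mul_of_nonneg_left ?_ (by positivity)
    refine le_trans (opnorm2 _ _ _ _) ?_
    have e1 : ‖-(ϑstar : ℂ) - z‖ ≤ |ϑstar| + ϑsharp := by
      refine le_trans (norm_sub_le _ _) ?_
      simp only [norm_neg, Complex.norm_real, Real.norm_eq_abs]
      gcongr
    have e2 : ‖(ϑstar : ℂ) - z‖ ≤ |ϑstar| + ϑsharp := by
      refine le_trans (norm_sub_le _ _) ?_
      simp only [Complex.norm_real, Real.norm_eq_abs]
      gcongr
    have e3 : ‖-w‖ = ‖w‖ := norm_neg _
    have e4 : ‖-((starRingEnd ℂ) w)‖ = ‖w‖ := by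
      rw [norm_neg]; exact RCLike.norm_conj _
    rw [e3, e4]
    have ht : 0 ≤ |τ| := abs_nonneg τ
    have hnn : 0 ≤ |ϑstar| + ϑsharp := by positivity
    nlinarith [hwub, mul_nonneg hnn ht]
  have hKey : N ≤ (2 * K / c1) / (1 + |τ|) := by
    have ht : 0 ≤ |τ| := abs_nonneg τ
    have hτ2 : |τ| ^ 2 = τ ^ 2 := sq_abs τ
    have h1 : K * (1 + |τ|) / ‖d‖ ≤ K * (1 + |τ|) / (c1 * (1 + τ ^ 2)) := by
      apply div_le_div_of_nonneg_left (by positivity) (by positivity) hdlow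
    have h2 : K * (1 + |τ|) / (c1 * (1 + τ ^ 2)) ≤ (2 * K / c1) / (1 + |τ|) := by
      rw [div_le_div_iff₀ (by positivity) (by positivity)]
      have hsq : (1 + |τ|) ^ 2 ≤ 2 * (1 + τ ^ 2) := by nlinarith [sq_nonneg (1 - |τ|)]
      rw [div_mul_eq_mul_div, le_div_iff₀ hc1pos]
      nlinarith [mul_le_mul_of_nonneg_left hsq (mul_nonneg hKpos.le hc1pos.le)]
    exact le_trans hNb (le_trans h1 h2)
  have hNnn : 0 ≤ N := norm_nonneg _
  refine ⟨hUnit, hKey, ?_, ?_⟩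
  · intro a ha hat
    refine le_trans hKey ?_
    exact div_le_div_of_nonneg_left (by positivity) ha (by linarith [abs_nonneg τ])
  · calc |τ| * N ≤ |τ| * ((2 * K / c1) / (1 + |τ|)) := by
          gcongr
      _ ≤ 2 * K / c1 := by
          rw [mul_div_assoc']
          rw [div_le_iff₀ (by linarith [abs_nonneg τ])]
          have : 0 ≤ 2 * K / c1 := by positivity
          nlinarith [abs_nonneg τ]
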